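/- If D = 1, then for every real α ∈ (0,∞) with α ≠ 1 the minimum of the Rényi divergence D_α(p‖U) over all feasible distributions p for the symmetric TSC scheme equals (K−1)·log N; the same value (K−1)·log N is the minimum of the Kullback–Leibler divergence Σ_m p_m log(N^K p_m) and of log(N^K · max_m p_m) over feasible distributions. -/

import Mathlib

open Finset Real

/-- Download cost of option `m` (0-indexed: options `1,…,N` of the paper are `m < N`)
in the symmetric TSC scheme with `N` databases and `K` messages. -/
noncomputable def tscCost (N m : ℕ) : ℝ := if m < N then (N : ℝ) - 1 else (N : ℝ)

/-- `p` is a feasible query distribution for the symmetric TSC scheme with expected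
normalized download cost `D`. -/
def TSCFeasible (N K : ℕ) (D : ℝ) (p : ℕ → ℝ) : Prop :=
  (∀ m ∈ Finset.range (N ^ K), 0 ≤ p m) ∧
  (∑ m ∈ Finset.range (N ^ K), p m = 1) ∧
  (1 / ((N : ℝ) - 1)) * (∑ m ∈ Finset.range (N ^ K), p m * tscCost N m) = D

/-- The optimal distribution `p*` for the symmetric TSC scheme. -/
noncomputable def tscOpt (N K : ℕ) (D : ℝ) (m : ℕ) : ℝ :=
  if m < N then (1 - ((N : ℝ) - 1) * (D - 1)) / N
  else ((N : ℝ) - 1) * (D - 1) / ((N : ℝ) ^ K - (N : ℝ))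

/-- Download cost of option `m` (0-indexed) in the alternative PIR scheme with
message length `L`. -/
noncomputable def altCost (N L m : ℕ) : ℝ := if m < N then (L : ℝ) else (L : ℝ) + 1

/-- `p` is a feasible query distribution for the alternative PIR scheme
(`M = N (L+1)^(K-1)` options) with expected normalized download cost `D`. -/
def AltFeasible (N K L : ℕ) (D : ℝ) (p : ℕ → ℝ) : Prop :=
  (∀ m ∈ Finset.range (N * (L + 1) ^ (K - 1)), 0 ≤ p m) ∧
  (∑ m ∈ Finset.range (N * (L + 1) ^ (K - 1)), p m = 1) ∧
  (1 / (L : ℝ)) * (∑ m ∈ Finset.range (N * (L + 1) ^ (K - 1)), p m * altCost N L m) = D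

/-- The optimal distribution `q*` for the alternative PIR scheme. -/
noncomputable def altOpt (N K L : ℕ) (D : ℝ) (m : ℕ) : ℝ :=
  if m < N then (1 - (L : ℝ) * (D - 1)) / N
  else (L : ℝ) * (D - 1) / ((N : ℝ) * ((L : ℝ) + 1) ^ (K - 1) - (N : ℝ))

/-- Rényi divergence of order `α` (`0 < α`, `α ≠ 1`) of a distribution `p` on `M`
options from the uniform distribution on those options (natural logarithm). -/
noncomputable def renyiDiv (M : ℕ) (α : ℝ) (p : ℕ → ℝ) : ℝ :=
  (1 / (α - 1)) * Real.log ((M : ℝ) ^ (α - 1) * ∑ m ∈ Finset.range M, p m ^ α)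

/-- Kullback–Leibler divergence of a distribution `p` on `M` options from the uniform
distribution on those options (natural logarithm, with `0 · log 0 = 0`). -/
noncomputable def klDivUnif (M : ℕ) (p : ℕ → ℝ) : ℝ :=
  ∑ m ∈ Finset.range M, p m * Real.log ((M : ℝ) * p m)

/-- The maximum of `p` over the `M` options. -/
noncomputable def maxOver (M : ℕ) (hM : M ≠ 0) (p : ℕ → ℝ) : ℝ :=
  (Finset.range M).sup' (Finset.nonempty_range_iff.mpr hM) p

section AuxTSC

lemma sum_shrink' {M N : ℕ} (hNM : N ≤ M) (f : ℕ → ℝ)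
    (hf : ∀ m, N ≤ m → m < M → f m = 0) :
    ∑ m ∈ Finset.range M, f m = ∑ m ∈ Finset.range N, f m := by
  refine (Finset.sum_subset (Finset.range_subset_range.2 hNM) ?_).symm
  intro m hm hm'
  simp only [Finset.mem_range, not_lt] at hm hm'
  exact hf m hm' hm

lemma feas_struct {N K : ℕ} (hN : 2 ≤ N) (hK : 2 ≤ K) {p : ℕ → ℝ}
    (h : TSCFeasible N K 1 p) :
    (∀ m ∈ Finset.range (N ^ K), 0 ≤ p m) ∧
    (∀ m, N ≤ m → m < N ^ K → p m = 0) ∧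
    (∑ m ∈ Finset.range N, p m = 1) := by
  obtain ⟨h0, h1, h2⟩ := h
  have hNM : N ≤ N ^ K := Nat.le_self_pow (by omega) N
  have hN1 : ((N : ℝ) - 1) ≠ 0 := by
    have : (2 : ℝ) ≤ (N : ℝ) := by exact_mod_cast hN
    intro hc; linarith
  have hcost : ∑ m ∈ Finset.range (N ^ K), p m * tscCost N m = (N : ℝ) - 1 := by
    field_simp at h2
    linarith [h2]
  have hsplit : ∀ m, p m * tscCost N m
      = p m * ((N : ℝ) - 1) + (if m < N then 0 else p m) := by
    intro m
    unfold tscCost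
    by_cases hm : m < N <;> simp [hm] <;> ring
  have hT : ∑ m ∈ Finset.range (N ^ K), (if m < N then 0 else p m) = 0 := by
    have := hcost
    simp only [hsplit, Finset.sum_add_distrib, ← Finset.sum_mul, h1, one_mul] at this
    linarith
  have hzero : ∀ m, N ≤ m → m < N ^ K → p m = 0 := by
    intro m hm hm'
    have hnn : ∀ i ∈ Finset.range (N ^ K), 0 ≤ (if i < N then 0 else p i) := by
      intro i hi
      by_cases hiN : i < N <;> simp [hiN]
      exact h0 i hi
    have := (Finset.sum_eq_zero_iff_of_nonneg hnn).1 hT m (Finset.mem_range.2 hm')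
    simpa [Nat.not_lt.2 hm] using this
  refine ⟨h0, hzero, ?_⟩
  rw [← sum_shrink' hNM p hzero]
  exact h1

lemma cast_K_sub_one {K : ℕ} (hK : 2 ≤ K) : ((K - 1 : ℕ) : ℝ) = (K : ℝ) - 1 := by
  have : (1 : ℕ) ≤ K := by omega
  push_cast [Nat.cast_sub this]
  ring

lemma pow_K_mul_inv {N K : ℕ} (hN : 2 ≤ N) (hK : 2 ≤ K) :
    ((N : ℝ)) ^ K * (1 / (N : ℝ)) = (N : ℝ) ^ (K - 1 : ℕ) := by
  have hNpos : (0 : ℝ) < (N : ℝ) := by positivity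
  have hKK : K = (K - 1) + 1 := by omega
  rw [hKK, pow_succ]
  field_simp
  rw [Nat.add_sub_cancel]

/-- the key rpow computation -/
lemma rpow_base_eq {N K : ℕ} (hN : 2 ≤ N) (hK : 2 ≤ K) (α : ℝ) :
    ((N : ℝ) ^ K) ^ (α - 1) * ((N : ℝ) * (1 / (N : ℝ)) ^ α)
      = (N : ℝ) ^ (((K : ℝ) - 1) * (α - 1)) := by
  have hNpos : (0 : ℝ) < (N : ℝ) := by positivity
  rw [← Real.rpow_natCast (N : ℝ) K, ← Real.rpow_mul hNpos.le]
  rw [one_div, ← Real.rpow_neg_one (N : ℝ), ← Real.rpow_mul hNpos.le]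
  nth_rewrite 2 [← Real.rpow_one (N : ℝ)]
  rw [← Real.rpow_add hNpos, ← Real.rpow_add hNpos]
  congr 1
  ring

lemma tscOpt_apply {N K : ℕ} (m : ℕ) :
    tscOpt N K 1 m = if m < N then 1 / (N : ℝ) else 0 := by
  simp [tscOpt]

lemma tscOpt_feasible {N K : ℕ} (hN : 2 ≤ N) (hK : 2 ≤ K) :
    TSCFeasible N K 1 (tscOpt N K 1) := by
  have hNM : N ≤ N ^ K := Nat.le_self_pow (by omega) N
  have hNpos : (0 : ℝ) < (N : ℝ) := by
    have : 0 < N := by omega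
    exact_mod_cast this
  have hN1 : ((N : ℝ) - 1) ≠ 0 := by
    have : (2 : ℝ) ≤ (N : ℝ) := by exact_mod_cast hN
    intro hc; linarith
  refine ⟨?_, ?_, ?_⟩
  · intro m _
    rw [tscOpt_apply]
    split <;> positivity
  · rw [sum_shrink' hNM _ (fun m hm _ => by
      rw [tscOpt_apply, if_neg (Nat.not_lt.2 hm)])]
    rw [Finset.sum_congr rfl (fun m hm => by
      rw [tscOpt_apply, if_pos (Finset.mem_range.1 hm)])]
    rw [Finset.sum_const, Finset.card_range, nsmul_eq_mul]
    field_simp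
  · rw [sum_shrink' hNM _ (fun m hm _ => by
      rw [tscOpt_apply, if_neg (Nat.not_lt.2 hm), zero_mul])]
    rw [Finset.sum_congr rfl (fun m hm => show tscOpt N K 1 m * tscCost N m
        = (1 / (N : ℝ)) * ((N : ℝ) - 1) by
      rw [tscOpt_apply, tscCost, if_pos (Finset.mem_range.1 hm),
        if_pos (Finset.mem_range.1 hm)])]
    rw [Finset.sum_const, Finset.card_range, nsmul_eq_mul]
    field_simp

lemma renyi_opt_val {N K : ℕ} (hN : 2 ≤ N) (hK : 2 ≤ K) (α : ℝ)
    (hα : 0 < α) (hα1 : α ≠ 1) :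
    renyiDiv (N ^ K) α (tscOpt N K 1) = ((K : ℝ) - 1) * Real.log N := by
  have hNM : N ≤ N ^ K := Nat.le_self_pow (by omega) N
  have hNpos : (0 : ℝ) < (N : ℝ) := by
    have : 0 < N := by omega
    exact_mod_cast this
  have hα1' : α - 1 ≠ 0 := sub_ne_zero.2 hα1
  rw [renyiDiv]
  rw [sum_shrink' hNM _ (fun m hm _ => by
    rw [tscOpt_apply, if_neg (Nat.not_lt.2 hm), Real.zero_rpow hα.ne'])]
  rw [Finset.sum_congr rfl (fun m hm => by
    rw [tscOpt_apply, if_pos (Finset.mem_range.1 hm)])]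
  rw [Finset.sum_const, Finset.card_range, nsmul_eq_mul]
  rw [show ((N ^ K : ℕ) : ℝ) = (N : ℝ) ^ K by push_cast; ring]
  rw [rpow_base_eq hN hK α, Real.log_rpow hNpos]
  field_simp

lemma kl_opt_val {N K : ℕ} (hN : 2 ≤ N) (hK : 2 ≤ K) :
    klDivUnif (N ^ K) (tscOpt N K 1) = ((K : ℝ) - 1) * Real.log N := by
  have hNM : N ≤ N ^ K := Nat.le_self_pow (by omega) N
  have hNpos : (0 : ℝ) < (N : ℝ) := by
    have : 0 < N := by omega
    exact_mod_cast this
  rw [klDivUnif]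
  rw [sum_shrink' hNM _ (fun m hm _ => by
    rw [tscOpt_apply, if_neg (Nat.not_lt.2 hm), zero_mul])]
  rw [Finset.sum_congr rfl (fun m hm => show
      tscOpt N K 1 m * Real.log (((N ^ K : ℕ) : ℝ) * tscOpt N K 1 m)
        = (1 / (N : ℝ)) * (((K : ℝ) - 1) * Real.log N) by
    rw [tscOpt_apply, if_pos (Finset.mem_range.1 hm)]
    rw [show ((N ^ K : ℕ) : ℝ) = (N : ℝ) ^ K by push_cast; ring]
    rw [pow_K_mul_inv hN hK, Real.log_pow, cast_K_sub_one hK])]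
  rw [Finset.sum_const, Finset.card_range, nsmul_eq_mul]
  field_simp

lemma max_opt_val {N K : ℕ} (hN : 2 ≤ N) (hK : 2 ≤ K) :
    Real.log ((N : ℝ) ^ K *
        maxOver (N ^ K) (pow_ne_zero K (Nat.pos_iff_ne_zero.mp (by omega))) (tscOpt N K 1))
      = ((K : ℝ) - 1) * Real.log N := by
  have hNM : N ≤ N ^ K := Nat.le_self_pow (by omega) N
  have hNpos : (0 : ℝ) < (N : ℝ) := by
    have : 0 < N := by omega
    exact_mod_cast this
  have hmax : maxOver (N ^ K) (pow_ne_zero K (Nat.pos_iff_ne_zero.mp (by omega))) (tscOpt N K 1)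
      = 1 / (N : ℝ) := by
    apply le_antisymm
    · apply Finset.sup'_le
      intro m _
      rw [tscOpt_apply]
      split
      · exact le_refl _
      · positivity
    · have h0 : (0 : ℕ) ∈ Finset.range (N ^ K) := Finset.mem_range.2 (by positivity)
      have := Finset.le_sup' (tscOpt N K 1) h0
      rwa [tscOpt_apply, if_pos (by omega : 0 < N)] at this
  rw [hmax, pow_K_mul_inv hN hK, Real.log_pow, cast_K_sub_one hK]

lemma renyi_lb {N K : ℕ} (hN : 2 ≤ N) (hK : 2 ≤ K) {p : ℕ → ℝ}
    (hfeas : TSCFeasible N K 1 p) (α : ℝ) (hα : 0 < α) (hα1 : α ≠ 1) :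
    ((K : ℝ) - 1) * Real.log N ≤ renyiDiv (N ^ K) α p := by
  obtain ⟨h0, hz, hs⟩ := feas_struct hN hK hfeas
  have hNM : N ≤ N ^ K := Nat.le_self_pow (by omega) N
  have hNpos : (0 : ℝ) < (N : ℝ) := by
    have : 0 < N := by omega
    exact_mod_cast this
  have hα1' : α - 1 ≠ 0 := sub_ne_zero.2 hα1
  have hnn : ∀ m ∈ Finset.range N, 0 ≤ p m := fun m hm =>
    h0 m (Finset.mem_range.2 (lt_of_lt_of_le (Finset.mem_range.1 hm) hNM))
  have hsum : ∑ m ∈ Finset.range (N ^ K), p m ^ α = ∑ m ∈ Finset.range N, p m ^ α :=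
    sum_shrink' hNM _ (fun m hm hm' => by rw [hz m hm hm', Real.zero_rpow hα.ne'])
  set S : ℝ := ∑ m ∈ Finset.range N, p m ^ α with hSdef
  have hSnn : ∀ i ∈ Finset.range N, 0 ≤ p i ^ α := fun i hi =>
    Real.rpow_nonneg (hnn i hi) α
  have hSpos : 0 < S := by
    obtain ⟨m, hm, hpm⟩ : ∃ m ∈ Finset.range N, 0 < p m := by
      by_contra hcon
      push_neg at hcon
      have : ∑ m ∈ Finset.range N, p m ≤ 0 := Finset.sum_nonpos hcon
      linarith
    calc (0 : ℝ) < p m ^ α := Real.rpow_pos_of_pos hpm α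
    _ ≤ S := Finset.single_le_sum hSnn hm
  have hw' : ∑ _i ∈ Finset.range N, (1 / (N : ℝ)) = 1 := by
    rw [Finset.sum_const, Finset.card_range, nsmul_eq_mul]
    field_simp
  have hwnn : ∀ i ∈ Finset.range N, (0 : ℝ) ≤ 1 / (N : ℝ) := fun i _ => by positivity
  have hident : (1 / (α - 1)) * (((K : ℝ) - 1) * (α - 1) * Real.log N)
      = ((K : ℝ) - 1) * Real.log N := by
    field_simp
  have hgoal : renyiDiv (N ^ K) α p
      = (1 / (α - 1)) * Real.log (((N : ℝ) ^ K) ^ (α - 1) * S) := by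
    rw [renyiDiv, hsum, show ((N ^ K : ℕ) : ℝ) = (N : ℝ) ^ K by push_cast; ring]
  rcases hα1.lt_or_gt with h1 | h1
  · -- α < 1 : concavity, S ≤ N * (1/N)^α
    have hq1 : 1 ≤ 1 / α := one_le_one_div hα h1.le
    have key := Real.rpow_arith_mean_le_arith_mean_rpow (Finset.range N)
      (fun _ => 1 / (N : ℝ)) (fun m => p m ^ α) hwnn hw' hSnn hq1
    have hpow : ∀ m ∈ Finset.range N, (p m ^ α) ^ (1 / α) = p m := by
      intro m hm
      rw [← Real.rpow_mul (hnn m hm), mul_one_div_cancel hα.ne', Real.rpow_one]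
    have keyA : ((1 / (N : ℝ)) * S) ^ (1 / α) ≤ 1 / (N : ℝ) := by
      have e1 : ∑ i ∈ Finset.range N, (1 / (N : ℝ)) * p i ^ α = (1 / (N : ℝ)) * S :=
        (Finset.mul_sum _ _ _).symm
      have e2 : ∑ i ∈ Finset.range N, (1 / (N : ℝ)) * (p i ^ α) ^ (1 / α)
          = 1 / (N : ℝ) := by
        rw [Finset.sum_congr rfl (fun m hm => by rw [hpow m hm]), ← Finset.mul_sum,
          hs, mul_one]
      simpa only [e1, e2] using key
    have key2 : (1 / (N : ℝ)) * S ≤ (1 / (N : ℝ)) ^ α := by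
      have h1N : ((1 / (N : ℝ)) ^ α) ^ (1 / α) = 1 / (N : ℝ) := by
        rw [← Real.rpow_mul (by positivity), mul_one_div_cancel hα.ne', Real.rpow_one]
      have := keyA.trans_eq h1N.symm
      exact (Real.rpow_le_rpow_iff (by positivity) (by positivity) (by positivity)).1 this
    have hSle : S ≤ (N : ℝ) * (1 / (N : ℝ)) ^ α := by
      have := mul_le_mul_of_nonneg_left key2 hNpos.le
      calc S = (N : ℝ) * ((1 / (N : ℝ)) * S) := by field_simp
      _ ≤ (N : ℝ) * (1 / (N : ℝ)) ^ α := this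
    have harg : ((N : ℝ) ^ K) ^ (α - 1) * S ≤ (N : ℝ) ^ (((K : ℝ) - 1) * (α - 1)) := by
      rw [← rpow_base_eq hN hK α]
      exact mul_le_mul_of_nonneg_left hSle (Real.rpow_nonneg (by positivity) _)
    have hlog : Real.log (((N : ℝ) ^ K) ^ (α - 1) * S)
        ≤ ((K : ℝ) - 1) * (α - 1) * Real.log N := by
      rw [← Real.log_rpow hNpos]
      exact Real.log_le_log (by positivity) harg
    have hneg : (1 / (α - 1)) ≤ 0 := by
      apply div_nonpos_of_nonneg_of_nonpos zero_le_one
      linarith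
    have := mul_le_mul_of_nonpos_left hlog hneg
    rw [hgoal]
    linarith [hident ▸ this]
  · -- 1 < α : convexity, N * (1/N)^α ≤ S
    have key := Real.rpow_arith_mean_le_arith_mean_rpow (Finset.range N)
      (fun _ => 1 / (N : ℝ)) p hwnn hw' hnn h1.le
    have keyB : (1 / (N : ℝ)) ^ α ≤ (1 / (N : ℝ)) * S := by
      have e1 : ∑ i ∈ Finset.range N, (1 / (N : ℝ)) * p i = 1 / (N : ℝ) := by
        rw [← Finset.mul_sum, hs, mul_one]
      have e2 : ∑ i ∈ Finset.range N, (1 / (N : ℝ)) * p i ^ α = (1 / (N : ℝ)) * S :=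
        (Finset.mul_sum _ _ _).symm
      simpa only [e1, e2] using key
    have hSge : (N : ℝ) * (1 / (N : ℝ)) ^ α ≤ S := by
      have := mul_le_mul_of_nonneg_left keyB hNpos.le
      calc (N : ℝ) * (1 / (N : ℝ)) ^ α ≤ (N : ℝ) * ((1 / (N : ℝ)) * S) := this
      _ = S := by field_simp
    have harg : (N : ℝ) ^ (((K : ℝ) - 1) * (α - 1)) ≤ ((N : ℝ) ^ K) ^ (α - 1) * S := by
      rw [← rpow_base_eq hN hK α]
      exact mul_le_mul_of_nonneg_left hSge (Real.rpow_nonneg (by positivity) _)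
    have hlog : ((K : ℝ) - 1) * (α - 1) * Real.log N
        ≤ Real.log (((N : ℝ) ^ K) ^ (α - 1) * S) := by
      rw [← Real.log_rpow hNpos]
      exact Real.log_le_log (by positivity) harg
    have hpos : (0 : ℝ) ≤ 1 / (α - 1) := by
      have h2 : (0 : ℝ) < α - 1 := by linarith
      positivity
    have := mul_le_mul_of_nonneg_left hlog hpos
    rw [hgoal]
    linarith [hident ▸ this]

lemma kl_lb {N K : ℕ} (hN : 2 ≤ N) (hK : 2 ≤ K) {p : ℕ → ℝ}
    (hfeas : TSCFeasible N K 1 p) :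
    ((K : ℝ) - 1) * Real.log N ≤ klDivUnif (N ^ K) p := by
  obtain ⟨h0, hz, hs⟩ := feas_struct hN hK hfeas
  have hNM : N ≤ N ^ K := Nat.le_self_pow (by omega) N
  have hNpos : (0 : ℝ) < (N : ℝ) := by
    have : 0 < N := by omega
    exact_mod_cast this
  have hnn : ∀ m ∈ Finset.range N, 0 ≤ p m := fun m hm =>
    h0 m (Finset.mem_range.2 (lt_of_lt_of_le (Finset.mem_range.1 hm) hNM))
  have hsum : klDivUnif (N ^ K) p
      = ∑ m ∈ Finset.range N, p m * Real.log (((N ^ K : ℕ) : ℝ) * p m) := by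
    rw [klDivUnif]
    exact sum_shrink' hNM _ (fun m hm hm' => by rw [hz m hm hm', zero_mul])
  have key : ∀ m ∈ Finset.range N,
      p m * (((K : ℝ) - 1) * Real.log N) + (p m - 1 / (N : ℝ))
        ≤ p m * Real.log (((N ^ K : ℕ) : ℝ) * p m) := by
    intro m hm
    rcases eq_or_lt_of_le (hnn m hm) with he | hpos
    · rw [← he]
      simp only [zero_mul, zero_add, zero_sub, mul_zero]
      have : (0 : ℝ) < 1 / (N : ℝ) := by positivity
      linarith
    · have hMp : ((N ^ K : ℕ) : ℝ) * p m = (N : ℝ) ^ (K - 1 : ℕ) * ((N : ℝ) * p m) := by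
        have hNK : (N : ℝ) ^ K = (N : ℝ) ^ (K - 1) * (N : ℝ) := by
          rw [← pow_succ]
          congr 1
          omega
        rw [show ((N ^ K : ℕ) : ℝ) = (N : ℝ) ^ K by push_cast; ring, hNK]
        ring
      rw [hMp, Real.log_mul (by positivity) (by positivity), Real.log_pow,
        cast_K_sub_one hK]
      have hlog : 1 - ((N : ℝ) * p m)⁻¹ ≤ Real.log ((N : ℝ) * p m) :=
        Real.one_sub_inv_le_log_of_pos (by positivity)
      have hxp : p m * ((N : ℝ) * p m)⁻¹ = 1 / (N : ℝ) := by
        field_simp [hpos.ne', hNpos.ne']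
      nlinarith [mul_le_mul_of_nonneg_left hlog hpos.le]
  have hcalc : ∑ m ∈ Finset.range N,
      (p m * (((K : ℝ) - 1) * Real.log N) + (p m - 1 / (N : ℝ)))
        = ((K : ℝ) - 1) * Real.log N := by
    rw [Finset.sum_add_distrib, ← Finset.sum_mul, hs, one_mul,
      Finset.sum_sub_distrib, hs, Finset.sum_const, Finset.card_range, nsmul_eq_mul]
    field_simp
    ring
  rw [hsum, ← hcalc]
  exact Finset.sum_le_sum key

lemma max_lb {N K : ℕ} (hN : 2 ≤ N) (hK : 2 ≤ K) {p : ℕ → ℝ}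
    (hfeas : TSCFeasible N K 1 p) :
    ((K : ℝ) - 1) * Real.log N
      ≤ Real.log ((N : ℝ) ^ K *
          maxOver (N ^ K) (pow_ne_zero K (Nat.pos_iff_ne_zero.mp (by omega))) p) := by
  obtain ⟨h0, hz, hs⟩ := feas_struct hN hK hfeas
  have hNM : N ≤ N ^ K := Nat.le_self_pow (by omega) N
  have hNpos : (0 : ℝ) < (N : ℝ) := by
    have : 0 < N := by omega
    exact_mod_cast this
  obtain ⟨m, hm, hpm⟩ : ∃ m ∈ Finset.range N, 1 / (N : ℝ) ≤ p m := by
    by_contra hcon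
    push_neg at hcon
    have hlt : ∑ m ∈ Finset.range N, p m < ∑ _m ∈ Finset.range N, (1 / (N : ℝ)) :=
      Finset.sum_lt_sum_of_nonempty (Finset.nonempty_range_iff.2 (by omega)) hcon
    rw [hs, Finset.sum_const, Finset.card_range, nsmul_eq_mul] at hlt
    rw [mul_one_div, div_self hNpos.ne'] at hlt
    exact lt_irrefl 1 hlt
  have hmax : 1 / (N : ℝ) ≤ maxOver (N ^ K) (pow_ne_zero K (Nat.pos_iff_ne_zero.mp (by omega))) p :=
    le_trans hpm (Finset.le_sup' p (Finset.mem_range.2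
      (lt_of_lt_of_le (Finset.mem_range.1 hm) hNM)))
  have harg : (N : ℝ) ^ K * (1 / (N : ℝ))
      ≤ (N : ℝ) ^ K * maxOver (N ^ K) (pow_ne_zero K (Nat.pos_iff_ne_zero.mp (by omega))) p :=
    mul_le_mul_of_nonneg_left hmax (by positivity)
  have := Real.log_le_log (by positivity) harg
  rwa [pow_K_mul_inv hN hK, Real.log_pow, cast_K_sub_one hK] at this

end AuxTSC

/-- at download cost `D = 1`, for every order `α ∈ (0,∞)`, `α ≠ 1`, the
minimum of the Rényi divergence over feasible distributions of the symmetric TSC scheme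
equals `(K-1) log N`; the same value is the minimum of the KL divergence and of
`log (N^K · max_m pₘ)`. -/
theorem tsc_full_leakage (N K : ℕ) (hN : 2 ≤ N) (hK : 2 ≤ K) :
    (∀ α : ℝ, 0 < α → α ≠ 1 →
      IsLeast {v : ℝ | ∃ p : ℕ → ℝ, TSCFeasible N K 1 p ∧ v = renyiDiv (N ^ K) α p}
        (((K : ℝ) - 1) * Real.log N)) ∧
    IsLeast {v : ℝ | ∃ p : ℕ → ℝ, TSCFeasible N K 1 p ∧ v = klDivUnif (N ^ K) p}
      (((K : ℝ) - 1) * Real.log N) ∧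
    IsLeast {v : ℝ | ∃ p : ℕ → ℝ, TSCFeasible N K 1 p ∧
        v = Real.log ((N : ℝ) ^ K *
          maxOver (N ^ K) (pow_ne_zero K (show N ≠ 0 by omega)) p)}
      (((K : ℝ) - 1) * Real.log N) := by
  refine ⟨?_, ⟨⟨tscOpt N K 1, tscOpt_feasible hN hK, (kl_opt_val hN hK).symm⟩, ?_⟩,
    ⟨tscOpt N K 1, tscOpt_feasible hN hK, (max_opt_val hN hK).symm⟩, ?_⟩
  · intro α hα hα1
    refine ⟨⟨tscOpt N K 1, tscOpt_feasible hN hK, (renyi_opt_val hN hK α hα hα1).symm⟩, ?_⟩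
    rintro v ⟨p, hp, rfl⟩
    exact renyi_lb hN hK hp α hα hα1
  · rintro v ⟨p, hp, rfl⟩
    exact kl_lb hN hK hp
  · rintro v ⟨p, hp, rfl⟩
    exact max_lb hN hK hp
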